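/- Let W be an n-dimensional standard Brownian motion, A ∈ ℝ^{n×n}, δ ∈ (0,1), π_δ(t) = δ⌊t/δ⌋, and M_t = ∫_0^t e^{−sA} dW_s. Then almost surely, for all t ≥ 0, |e^{tA}(M_t − M_{π_δ(t)})| ≤ δ|A|(e^{|A|} + e^{2t|A|}) · sup_{0 ≤ s ≤ t}|W_s| + e^{|A|} · |W_t − W_{π_δ(t)}|. -/

import Mathlib

/- `W` is a standard `n`-dimensional Brownian motion, `A` a square matrix
(a continuous linear endomorphism of Euclidean space), `π_δ(t) = δ⌊t/δ⌋`,
and `M_t = ∫_0^t e^{−sA} dW_s` is the Paley–Wiener/Itô integral of the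
deterministic integrand `s ↦ e^{−sA}`, defined pathwise (since Mathlib has
no Itô integral) via the integration-by-parts formula
`M_t = e^{−tA}W_t + ∫_0^t e^{−sA} A W_s ds`.  The supremum in the bound is
over `s ∈ [0,t]`. -/

open MeasureTheory ProbabilityTheory

set_option maxHeartbeats 1000000
set_option synthInstance.maxHeartbeats 400000

noncomputable section

abbrev Euc (n : ℕ) := EuclideanSpace ℝ (Fin n)
abbrev Mat (n : ℕ) := Euc n →L[ℝ] Euc n

/-- A standard `n`-dimensional Brownian motion: starts at `0`, has continuous
paths, increments over disjoint intervals (and across the `n` independent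
coordinates) are independent, and each coordinate of the increment over
`[s,t]` is a centered Gaussian of variance `t − s`. -/
structure IsStdBrownianMotion {Ω : Type*} [MeasurableSpace Ω] (P : Measure Ω)
    (n : ℕ) (W : ℝ → Ω → Euc n) : Prop where
  isProb : IsProbabilityMeasure P
  init : ∀ ω, W 0 ω = 0
  meas : ∀ t, Measurable (W t)
  cont : ∀ ω, Continuous fun t => W t ω
  gauss : ∀ s t : ℝ, 0 ≤ s → s ≤ t → ∀ i : Fin n,
    Measure.map (fun ω => W t ω i - W s ω i) P = gaussianReal 0 (Real.toNNReal (t - s))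
  indep : ∀ (m : ℕ) (u : ℕ → ℝ), Monotone u →
    iIndepFun
      (fun p : Fin m × Fin n => fun ω => W (u (p.1 + 1)) ω p.2 - W (u p.1) ω p.2) P

/-- `∫_a^t e^{−sA} dW_s`, defined pathwise via integration by parts. -/
def wienerIntegralExpNeg {n : ℕ} (A : Mat n) (W : ℝ → Euc n) (a t : ℝ) : Euc n :=
  NormedSpace.exp (-(t • A)) (W t) - NormedSpace.exp (-(a • A)) (W a) +
    ∫ s in a..t, NormedSpace.exp (-(s • A)) (A (W s))

namespace ExpMartAux

open NormedSpace

variable {𝔸 : Type*} [NormedRing 𝔸] [NormedAlgebra ℝ 𝔸] [CompleteSpace 𝔸]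

omit [NormedAlgebra ℝ 𝔸] [CompleteSpace 𝔸] in
lemma my_norm_pow_le (h1 : ‖(1:𝔸)‖ ≤ 1) (x : 𝔸) (n : ℕ) : ‖x ^ n‖ ≤ ‖x‖ ^ n := by
  cases n with
  | zero => simpa using h1
  | succ m => exact norm_pow_le' x m.succ_pos

lemma my_norm_exp_le (h1 : ‖(1:𝔸)‖ ≤ 1) (x : 𝔸) : ‖exp x‖ ≤ Real.exp ‖x‖ := by
  have h := NormedSpace.exp_series_hasSum_exp' (𝕂 := ℝ) x
  have hs : Summable fun n : ℕ => ‖(((n.factorial : ℝ))⁻¹ • x ^ n)‖ :=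
    NormedSpace.norm_expSeries_summable' x
  have hb : ∀ n : ℕ, ‖(((n.factorial : ℝ))⁻¹ • x ^ n)‖ ≤ ‖x‖ ^ n / n.factorial := by
    intro n
    rw [norm_smul, Real.norm_eq_abs, abs_of_nonneg (by positivity), div_eq_inv_mul]
    gcongr
    exact my_norm_pow_le h1 x n
  calc ‖exp x‖ ≤ ∑' n : ℕ, ‖(((n.factorial : ℝ))⁻¹ • x ^ n)‖ := by
        rw [← h.tsum_eq]; exact norm_tsum_le_tsum_norm hs
    _ ≤ ∑' n : ℕ, ‖x‖ ^ n / n.factorial :=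
        Summable.tsum_le_tsum hb hs (NormedSpace.expSeries_div_summable ‖x‖)
    _ = Real.exp ‖x‖ := by
        rw [Real.exp_eq_exp_ℝ, NormedSpace.exp_eq_tsum_div]

lemma my_norm_exp_sub_one_le (h1 : ‖(1:𝔸)‖ ≤ 1) (x : 𝔸) :
    ‖exp x - 1‖ ≤ ‖x‖ * Real.exp ‖x‖ := by
  have h := NormedSpace.exp_series_hasSum_exp' (𝕂 := ℝ) x
  have h' : HasSum (fun n : ℕ => (((n+1).factorial : ℝ))⁻¹ • x ^ (n+1)) (exp x - 1) := by
    have := (hasSum_nat_add_iff' (f := fun n : ℕ => ((n.factorial : ℝ))⁻¹ • x ^ n) 1).2 h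
    simpa using this
  have hs : Summable fun n : ℕ => ‖(((n+1).factorial : ℝ))⁻¹ • x ^ (n+1)‖ :=
    (NormedSpace.norm_expSeries_summable' (𝕂 := ℝ) x).comp_injective (add_left_injective 1)
  have hb : ∀ n : ℕ, ‖(((n+1).factorial : ℝ))⁻¹ • x ^ (n+1)‖ ≤ ‖x‖ * (‖x‖ ^ n / n.factorial) := by
    intro n
    rw [norm_smul, Real.norm_eq_abs, abs_of_nonneg (by positivity)]
    have hx : ‖x ^ (n+1)‖ ≤ ‖x‖ * ‖x‖ ^ n := by
      calc ‖x ^ (n+1)‖ = ‖x * x ^ n‖ := by rw [pow_succ']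
        _ ≤ ‖x‖ * ‖x ^ n‖ := norm_mul_le _ _
        _ ≤ ‖x‖ * ‖x‖ ^ n := by gcongr; exact my_norm_pow_le h1 x n
    have hfac : (((n+1).factorial : ℝ))⁻¹ ≤ ((n.factorial : ℝ))⁻¹ := by
      apply inv_anti₀ (by positivity)
      exact_mod_cast Nat.factorial_le (Nat.le_succ n)
    calc (((n+1).factorial : ℝ))⁻¹ * ‖x ^ (n+1)‖
        ≤ ((n.factorial : ℝ))⁻¹ * (‖x‖ * ‖x‖ ^ n) :=
          mul_le_mul hfac hx (norm_nonneg _) (by positivity)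
      _ = ‖x‖ * (‖x‖ ^ n / n.factorial) := by ring
  calc ‖exp x - 1‖ ≤ ∑' n : ℕ, ‖(((n+1).factorial : ℝ))⁻¹ • x ^ (n+1)‖ := by
        rw [← h'.tsum_eq]; exact norm_tsum_le_tsum_norm hs
    _ ≤ ∑' n : ℕ, ‖x‖ * (‖x‖ ^ n / n.factorial) :=
        Summable.tsum_le_tsum hb hs ((NormedSpace.expSeries_div_summable ‖x‖).mul_left ‖x‖)
    _ = ‖x‖ * Real.exp ‖x‖ := by
        rw [tsum_mul_left, Real.exp_eq_exp_ℝ, NormedSpace.exp_eq_tsum_div]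

lemma mat_norm_one_le (n : ℕ) : ‖(1 : Mat n)‖ ≤ 1 := by
  rw [ContinuousLinearMap.one_def]; exact ContinuousLinearMap.norm_id_le

lemma exp_smul_comp (n : ℕ) (A : Mat n) (a b : ℝ) (v : Euc n) :
    exp (a • A) (exp (b • A) v) = exp ((a + b) • A) v := by
  have comm : Commute (a • A) (b • A) := by
    refine ContinuousLinearMap.ext fun v => ?_
    simp only [ContinuousLinearMap.mul_apply, ContinuousLinearMap.smul_apply, _root_.map_smul]
    rw [smul_comm]
  let +nondep : NormedAlgebra ℚ (Mat n) := .restrictScalars ℚ ℝ (Mat n)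
  rw [show (a + b) • A = a • A + b • A from add_smul a b A,
    NormedSpace.exp_add_of_commute comm, ContinuousLinearMap.mul_apply]

lemma norm_smul_clm (n : ℕ) (c : ℝ) (B : Mat n) : ‖c • B‖ ≤ |c| * ‖B‖ := by
  refine ContinuousLinearMap.opNorm_le_bound _ (by positivity) fun v => ?_
  rw [ContinuousLinearMap.smul_apply, norm_smul, Real.norm_eq_abs, mul_assoc]
  gcongr
  exact B.le_opNorm v

lemma norm_exp_apply_le (n : ℕ) (B : Mat n) (v : Euc n) :
    ‖exp B v‖ ≤ Real.exp ‖B‖ * ‖v‖ := by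
  calc ‖exp B v‖ ≤ ‖exp B‖ * ‖v‖ := (exp B).le_opNorm v
    _ ≤ Real.exp ‖B‖ * ‖v‖ := by gcongr; exact my_norm_exp_le (mat_norm_one_le n) B

end ExpMartAux

open ExpMartAux

/-- Almost surely, for all `t ≥ 0`,
`|e^{tA}(M_t − M_{π_δ(t)})| ≤ δ|A|(e^{|A|} + e^{2t|A|}) sup_{0≤s≤t}|W_s|
+ e^{|A|} |W_t − W_{π_δ(t)}|`. -/
theorem exp_mart_increment_bound {Ω : Type*} [MeasurableSpace Ω]
    (P : Measure Ω) (n : ℕ) (W : ℝ → Ω → Euc n) (hW : IsStdBrownianMotion P n W)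
    (A : Mat n) (δ : ℝ) (hδ : δ ∈ Set.Ioo (0:ℝ) 1) :
    ∀ᵐ ω ∂P, ∀ t ≥ (0:ℝ),
      ‖NormedSpace.exp (t • A)
          (wienerIntegralExpNeg A (fun u => W u ω) 0 t -
            wienerIntegralExpNeg A (fun u => W u ω) 0 (δ * ↑⌊t / δ⌋))‖ ≤
        δ * ‖A‖ * (Real.exp ‖A‖ + Real.exp (2 * t * ‖A‖)) *
            (⨆ s : Set.Icc (0:ℝ) t, ‖W s.1 ω‖) +
          Real.exp ‖A‖ * ‖W t ω - W (δ * ↑⌊t / δ⌋) ω‖ := by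
  obtain ⟨hδ0, hδ1⟩ := hδ
  refine Filter.Eventually.of_forall fun ω => ?_
  intro t ht
  set w : ℝ → Euc n := fun u => W u ω with hwdef
  have hwc : Continuous w := hW.cont ω
  set τ : ℝ := δ * ⌊t / δ⌋ with hτ
  have hτ0 : 0 ≤ τ :=
    mul_nonneg hδ0.le (by exact_mod_cast Int.floor_nonneg.2 (div_nonneg ht hδ0.le))
  have hτt : τ ≤ t := by
    have h1 : (⌊t / δ⌋ : ℝ) ≤ t / δ := Int.floor_le _
    have h2 : δ * (⌊t / δ⌋ : ℝ) ≤ δ * (t / δ) := by gcongr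
    have h3 : δ * (t / δ) = t := by field_simp
    rw [hτ]; linarith
  have hh0 : 0 ≤ t - τ := by linarith
  have hhδ : t - τ ≤ δ := by
    have h1 : t / δ < (⌊t / δ⌋ : ℝ) + 1 := Int.lt_floor_add_one _
    have h2 : t < ((⌊t / δ⌋ : ℝ) + 1) * δ := (div_lt_iff₀ hδ0).1 h1
    rw [hτ]; nlinarith
  -- sup facts
  set S : ℝ := ⨆ s : Set.Icc (0:ℝ) t, ‖W s.1 ω‖ with hS
  have hbdd : BddAbove (Set.range fun s : Set.Icc (0:ℝ) t => ‖W s.1 ω‖) := by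
    have himg : (Set.range fun s : Set.Icc (0:ℝ) t => ‖W s.1 ω‖) =
        (fun s => ‖w s‖) '' Set.Icc (0:ℝ) t := by
      ext x
      constructor
      · rintro ⟨⟨s, hs⟩, rfl⟩; exact ⟨s, hs, rfl⟩
      · rintro ⟨s, hs, rfl⟩; exact ⟨⟨s, hs⟩, rfl⟩
    rw [himg]
    exact (isCompact_Icc.image (continuous_norm.comp hwc)).bddAbove
  have hle : ∀ s, s ∈ Set.Icc (0:ℝ) t → ‖w s‖ ≤ S := fun s hs =>
    le_ciSup hbdd (⟨s, hs⟩ : Set.Icc (0:ℝ) t)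
  have hS0 : 0 ≤ S := le_trans (norm_nonneg (w t)) (hle t ⟨ht, le_refl t⟩)
  -- integrand continuity
  let +nondep : NormedAlgebra ℚ (Mat n) := .restrictScalars ℚ ℝ (Mat n)
  have hf : Continuous fun s : ℝ => NormedSpace.exp (-(s • A)) (A (w s)) :=
    (NormedSpace.exp_continuous.comp (by continuity)).clm_apply (A.continuous.comp hwc)
  have hint : ∀ a b : ℝ, IntervalIntegrable
      (fun s : ℝ => NormedSpace.exp (-(s • A)) (A (w s))) volume a b :=
    fun a b => hf.intervalIntegrable a b
  -- difference identity
  have hdiff : wienerIntegralExpNeg A w 0 t - wienerIntegralExpNeg A w 0 τ =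
      NormedSpace.exp (-(t • A)) (w t) - NormedSpace.exp (-(τ • A)) (w τ) +
        ∫ s in τ..t, NormedSpace.exp (-(s • A)) (A (w s)) := by
    unfold wienerIntegralExpNeg
    rw [← intervalIntegral.integral_interval_sub_left (hint 0 t) (hint 0 τ)]
    abel
  set E : ℝ → Mat n := fun a => NormedSpace.exp (a • A) with hE
  have hneg : ∀ s : ℝ, NormedSpace.exp (-(s • A)) = E (-s) := by
    intro s; rw [hE]; congr 1; module
  -- main identity
  have hmain : NormedSpace.exp (t • A)
      (wienerIntegralExpNeg A w 0 t - wienerIntegralExpNeg A w 0 τ) =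
      E (t - τ) (w t - w τ) + ((1 : Mat n) - E (t - τ)) (w t) +
        ∫ s in τ..t, E (t - s) (A (w s)) := by
    rw [hdiff, map_add, map_sub]
    simp only [hneg]
    have e1 : NormedSpace.exp (t • A) (E (-t) (w t)) = w t := by
      rw [hE, exp_smul_comp n A t (-t) (w t)]
      have h0 : (t + -t) • A = (0 : Mat n) := by module
      rw [h0, NormedSpace.exp_zero, ContinuousLinearMap.one_apply]
    have e2 : NormedSpace.exp (t • A) (E (-τ) (w τ)) = E (t - τ) (w τ) := by
      have hsub : t + -τ = t - τ := by ring
      rw [hE, exp_smul_comp n A t (-τ) (w τ), hsub]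
    have e3 : NormedSpace.exp (t • A) (∫ s in τ..t, E (-s) (A (w s))) =
        ∫ s in τ..t, E (t - s) (A (w s)) := by
      have hint' : IntervalIntegrable (fun s : ℝ => E (-s) (A (w s))) volume τ t := by
        have := hint τ t
        simp only [hneg] at this
        exact this
      rw [← ContinuousLinearMap.intervalIntegral_comp_comm _ hint']
      refine intervalIntegral.integral_congr fun s _ => ?_
      have hsub : t + -s = t - s := by ring
      rw [hE, exp_smul_comp n A t (-s) (A (w s)), hsub]
    rw [e1, e2, e3]
    have hsplit : w t - E (t - τ) (w τ) =
        E (t - τ) (w t - w τ) + ((1 : Mat n) - E (t - τ)) (w t) := by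
      rw [map_sub, ContinuousLinearMap.sub_apply, ContinuousLinearMap.one_apply]
      abel
    rw [hsplit]
  rw [hmain]
  -- bounds
  have hnorm_h : ‖(t - τ) • A‖ ≤ δ * ‖A‖ := by
    calc ‖(t - τ) • A‖ ≤ |t - τ| * ‖A‖ := norm_smul_clm n _ A
      _ = (t - τ) * ‖A‖ := by rw [abs_of_nonneg hh0]
      _ ≤ δ * ‖A‖ := by gcongr
  have hnorm_h1 : ‖(t - τ) • A‖ ≤ ‖A‖ := by
    calc ‖(t - τ) • A‖ ≤ δ * ‖A‖ := hnorm_h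
      _ ≤ 1 * ‖A‖ := by gcongr
      _ = ‖A‖ := one_mul _
  have b1 : ‖E (t - τ) (w t - w τ)‖ ≤ Real.exp ‖A‖ * ‖w t - w τ‖ := by
    calc ‖E (t - τ) (w t - w τ)‖ ≤ Real.exp ‖(t - τ) • A‖ * ‖w t - w τ‖ :=
          norm_exp_apply_le n _ _
      _ ≤ Real.exp ‖A‖ * ‖w t - w τ‖ := by gcongr
  have b2 : ‖((1 : Mat n) - E (t - τ)) (w t)‖ ≤ δ * ‖A‖ * Real.exp ‖A‖ * S := by
    calc ‖((1 : Mat n) - E (t - τ)) (w t)‖ ≤ ‖(1 : Mat n) - E (t - τ)‖ * ‖w t‖ :=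
          ContinuousLinearMap.le_opNorm _ _
      _ ≤ (‖(t - τ) • A‖ * Real.exp ‖(t - τ) • A‖) * ‖w t‖ := by
          gcongr
          rw [norm_sub_rev]
          exact my_norm_exp_sub_one_le (mat_norm_one_le n) _
      _ ≤ (δ * ‖A‖) * Real.exp ‖A‖ * S := by
          have hwt : ‖w t‖ ≤ S := hle t ⟨ht, le_refl t⟩
          have e1 : Real.exp ‖(t - τ) • A‖ ≤ Real.exp ‖A‖ := Real.exp_le_exp.2 hnorm_h1
          have := mul_le_mul (mul_le_mul hnorm_h e1 (Real.exp_pos _).le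
            (mul_nonneg hδ0.le (norm_nonneg _))) hwt (norm_nonneg _)
            (mul_nonneg (mul_nonneg hδ0.le (norm_nonneg _)) (Real.exp_pos _).le)
          linarith
      _ = δ * ‖A‖ * Real.exp ‖A‖ * S := by ring
  have b3 : ‖∫ s in τ..t, E (t - s) (A (w s))‖ ≤ δ * ‖A‖ * Real.exp (2 * t * ‖A‖) * S := by
    have hbound : ∀ s ∈ Set.uIoc τ t, ‖E (t - s) (A (w s))‖ ≤
        ‖A‖ * Real.exp (2 * t * ‖A‖) * S := by
      intro s hs
      rw [Set.uIoc_of_le hτt] at hs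
      obtain ⟨hs1, hs2⟩ := hs
      have hs0 : 0 ≤ s := le_trans hτ0 hs1.le
      calc ‖E (t - s) (A (w s))‖ ≤ Real.exp ‖(t - s) • A‖ * ‖A (w s)‖ :=
            norm_exp_apply_le n _ _
        _ ≤ Real.exp (2 * t * ‖A‖) * (‖A‖ * S) := by
            have h1 : ‖(t - s) • A‖ ≤ 2 * t * ‖A‖ := by
              calc ‖(t - s) • A‖ ≤ |t - s| * ‖A‖ := norm_smul_clm n _ A
                _ = (t - s) * ‖A‖ := by
                    rw [abs_of_nonneg (by linarith : (0:ℝ) ≤ t - s)]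
                _ ≤ 2 * t * ‖A‖ := by
                    have h2t : t - s ≤ 2 * t := by linarith
                    gcongr
            have h2 : ‖A (w s)‖ ≤ ‖A‖ * S := by
              calc ‖A (w s)‖ ≤ ‖A‖ * ‖w s‖ := A.le_opNorm _
                _ ≤ ‖A‖ * S := by gcongr; exact hle s ⟨hs0, hs2⟩
            exact mul_le_mul (Real.exp_le_exp.2 h1) h2 (norm_nonneg _) (Real.exp_pos _).le
        _ = ‖A‖ * Real.exp (2 * t * ‖A‖) * S := by ring
    calc ‖∫ s in τ..t, E (t - s) (A (w s))‖ ≤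
        ‖A‖ * Real.exp (2 * t * ‖A‖) * S * |t - τ| :=
          intervalIntegral.norm_integral_le_of_norm_le_const hbound
      _ ≤ ‖A‖ * Real.exp (2 * t * ‖A‖) * S * δ := by
          rw [abs_of_nonneg hh0]
          have hC : 0 ≤ ‖A‖ * Real.exp (2 * t * ‖A‖) * S :=
            mul_nonneg (mul_nonneg (norm_nonneg _) (Real.exp_pos _).le) hS0
          exact mul_le_mul_of_nonneg_left hhδ hC
      _ = δ * ‖A‖ * Real.exp (2 * t * ‖A‖) * S := by ring
  calc ‖E (t - τ) (w t - w τ) + ((1 : Mat n) - E (t - τ)) (w t) +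
        ∫ s in τ..t, E (t - s) (A (w s))‖ ≤
      ‖E (t - τ) (w t - w τ)‖ + ‖((1 : Mat n) - E (t - τ)) (w t)‖ +
        ‖∫ s in τ..t, E (t - s) (A (w s))‖ := norm_add₃_le
    _ ≤ Real.exp ‖A‖ * ‖w t - w τ‖ + δ * ‖A‖ * Real.exp ‖A‖ * S +
        δ * ‖A‖ * Real.exp (2 * t * ‖A‖) * S := by gcongr
    _ = δ * ‖A‖ * (Real.exp ‖A‖ + Real.exp (2 * t * ‖A‖)) * S +
        Real.exp ‖A‖ * ‖w t - w τ‖ := by ring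

end
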